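/- Suppose a lattice triangle T has vertices O = (0,0), A, B and its circumcenter F is a lattice point. Then A and B each have both coordinates even or both coordinates odd, and the lattice perimeter of T is even. -/

import Mathlib

/-- Lattice length of the segment joining two lattice points. -/
def llen (P Q : ℤ × ℤ) : ℕ := Int.gcd (P.1 - Q.1) (P.2 - Q.2)

/-- Integer dot product on `ℤ × ℤ`. -/
def dotv (u v : ℤ × ℤ) : ℤ := u.1 * v.1 + u.2 * v.2

/-- The three vertices are not collinear (a genuine triangle). -/
def Noncollinear (V₀ V₁ V₂ : ℤ × ℤ) : Prop :=
  (V₁.1 - V₀.1) * (V₂.2 - V₀.2) - (V₂.1 - V₀.1) * (V₁.2 - V₀.2) ≠ 0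

/-- All three interior angles are strictly acute (positive dot products at each vertex). -/
def IsAcute (V₀ V₁ V₂ : ℤ × ℤ) : Prop :=
  0 < dotv (V₁ - V₀) (V₂ - V₀) ∧ 0 < dotv (V₀ - V₁) (V₂ - V₁) ∧
    0 < dotv (V₀ - V₂) (V₁ - V₂)

/-- `H` is the orthocenter of the triangle `V₀V₁V₂`. -/
def IsOrthocenter (H V₀ V₁ V₂ : ℤ × ℤ) : Prop :=
  dotv (H - V₀) (V₁ - V₂) = 0 ∧ dotv (H - V₁) (V₂ - V₀) = 0 ∧
    dotv (H - V₂) (V₀ - V₁) = 0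

/-- `F` is the circumcenter of the triangle `V₀V₁V₂` (equidistant from the vertices). -/
def IsCircumcenter (F V₀ V₁ V₂ : ℤ × ℤ) : Prop :=
  dotv (F - V₀) (F - V₀) = dotv (F - V₁) (F - V₁) ∧
    dotv (F - V₀) (F - V₀) = dotv (F - V₂) (F - V₂)

/-- Lattice perimeter of a lattice triangle. -/
def latPerim (V₀ V₁ V₂ : ℤ × ℤ) : ℕ := llen V₀ V₁ + llen V₁ V₂ + llen V₀ V₂

/-- The interior angle of the triangle at vertex `V`, with the other vertices `A`, `B`. -/
noncomputable def angleAt (V A B : ℤ × ℤ) : ℝ :=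
  Real.arccos ((((A.1 - V.1) * (B.1 - V.1) + (A.2 - V.2) * (B.2 - V.2) : ℤ) : ℝ) /
    (Real.sqrt (((A.1 - V.1) ^ 2 + (A.2 - V.2) ^ 2 : ℤ)) *
      Real.sqrt (((B.1 - V.1) ^ 2 + (B.2 - V.2) ^ 2 : ℤ))))


lemma even_gcd_iff (a b : ℤ) : Even (Int.gcd a b) ↔ Even a ∧ Even b := by
  rw [even_iff_two_dvd, even_iff_two_dvd, even_iff_two_dvd]
  constructor
  · intro h
    have h' : (2 : ℤ) ∣ (Int.gcd a b : ℤ) := Int.natCast_dvd_natCast.mpr h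
    exact ⟨h'.trans (Int.gcd_dvd_left a b), h'.trans (Int.gcd_dvd_right a b)⟩
  · rintro ⟨h1, h2⟩
    exact Int.natCast_dvd_natCast.mp (by exact_mod_cast Int.dvd_coe_gcd h1 h2)

theorem stmt8 (A B F : ℤ × ℤ) (hT : Noncollinear (0, 0) A B)
    (hF : IsCircumcenter F (0, 0) A B) :
    ((Even A.1 ∧ Even A.2) ∨ (Odd A.1 ∧ Odd A.2)) ∧
    ((Even B.1 ∧ Even B.2) ∨ (Odd B.1 ∧ Odd B.2)) ∧
    Even (latPerim (0, 0) A B) := by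
  obtain ⟨h1, h2⟩ := hF
  simp only [dotv, IsCircumcenter, Prod.fst_sub, Prod.snd_sub] at h1 h2
  have hA2 : A.1 * A.1 + A.2 * A.2 = 2 * (F.1 * A.1 + F.2 * A.2) := by
    simp at h1; linear_combination -h1
  have hB2 : B.1 * B.1 + B.2 * B.2 = 2 * (F.1 * B.1 + F.2 * B.2) := by
    simp at h2; linear_combination -h2
  have hAe : Even A.1 ↔ Even A.2 := by
    have : Even (A.1 * A.1 + A.2 * A.2) := ⟨F.1 * A.1 + F.2 * A.2, by linarith⟩
    have := Int.even_add.mp this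
    simpa [Int.even_mul] using this
  have hBe : Even B.1 ↔ Even B.2 := by
    have : Even (B.1 * B.1 + B.2 * B.2) := ⟨F.1 * B.1 + F.2 * B.2, by linarith⟩
    have := Int.even_add.mp this
    simpa [Int.even_mul] using this
  refine ⟨?_, ?_, ?_⟩
  · rcases Int.even_or_odd A.1 with h | h
    · exact Or.inl ⟨h, hAe.mp h⟩
    · exact Or.inr ⟨h, Int.not_even_iff_odd.mp (fun he => (Int.not_even_iff_odd.mpr h) (hAe.mpr he))⟩
  · rcases Int.even_or_odd B.1 with h | h
    · exact Or.inl ⟨h, hBe.mp h⟩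
    · exact Or.inr ⟨h, Int.not_even_iff_odd.mp (fun he => (Int.not_even_iff_odd.mpr h) (hBe.mpr he))⟩
  · have g1 := even_gcd_iff ((0,0).1 - A.1) ((0,0).2 - A.2)
    have g2 := even_gcd_iff (A.1 - B.1) (A.2 - B.2)
    have g3 := even_gcd_iff ((0,0).1 - B.1) ((0,0).2 - B.2)
    simp only [Prod.fst, Prod.snd, zero_sub, even_neg, Int.even_sub] at g1 g2 g3
    unfold latPerim llen
    simp only [Nat.even_iff, zero_sub] at g1 g2 g3 ⊢
    simp only [Int.even_iff] at g1 g2 g3 hAe hBe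
    omega
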